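/- Let φ : ℝ × ℝ → ℝ be differentiable and satisfy ∂_t φ(x, t) + (2 + sin x) ∂_x φ(x, t) = 0 for all (x, t) ∈ ℝ². Then φ(x, t + 2π/√3) = φ(x − 2π, t) for all (x, t) ∈ ℝ². In particular, with initial condition φ(x, 0) = φ⁰(x), the exact solution at the final time T = 2π/√3 is φ(x, T) = φ⁰(x − 2π). -/

import Mathlib

open Real

/-- Explicit smooth antiderivative of `1 / (2 + sin x)`. -/
noncomputable def advF (x : ℝ) : ℝ :=
  x / Real.sqrt 3 + (2 / Real.sqrt 3) *
    Real.arctan (((2 - Real.sqrt 3) * Real.sin x + 1 + Real.cos x) /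
      ((2 + Real.sqrt 3) + (Real.sqrt 3 - 2) * Real.cos x + Real.sin x))

lemma sqrt3_lt_two : Real.sqrt 3 < 2 := by
  nlinarith [Real.sq_sqrt (by norm_num : (3:ℝ) ≥ 0), Real.sqrt_nonneg 3]

lemma one_le_sqrt3 : (1:ℝ) ≤ Real.sqrt 3 := by
  nlinarith [Real.sq_sqrt (by norm_num : (3:ℝ) ≥ 0), Real.sqrt_nonneg 3]

lemma advD_pos (x : ℝ) :
    0 < (2 + Real.sqrt 3) + (Real.sqrt 3 - 2) * Real.cos x + Real.sin x := by
  nlinarith [Real.cos_le_one x, Real.neg_one_le_cos x, Real.neg_one_le_sin x,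
    Real.sin_le_one x, sqrt3_lt_two, one_le_sqrt3]

lemma two_add_sin_pos (x : ℝ) : (0:ℝ) < 2 + Real.sin x := by
  nlinarith [Real.neg_one_le_sin x]

lemma advF_hasDerivAt (x : ℝ) :
    HasDerivAt advF (1 / (2 + Real.sin x)) x := by
  set r := Real.sqrt 3 with hrdef
  set N : ℝ → ℝ := fun x => (2 - r) * Real.sin x + 1 + Real.cos x with hN
  set D : ℝ → ℝ := fun x => (2 + r) + (r - 2) * Real.cos x + Real.sin x with hD
  have hDpos : 0 < D x := advD_pos x
  have hNd : HasDerivAt N ((2 - r) * Real.cos x - Real.sin x) x := by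
    have h1 := (Real.hasDerivAt_sin x).const_mul (2 - r)
    have h2 := Real.hasDerivAt_cos x
    have := (h1.add_const 1).add h2
    simpa [hN, sub_eq_add_neg, Pi.add_def] using this
  have hDd : HasDerivAt D ((2 - r) * Real.sin x + Real.cos x) x := by
    have h1 := (Real.hasDerivAt_cos x).const_mul (r - 2)
    have h2 := Real.hasDerivAt_sin x
    have := ((h1.const_add (2 + r)).add h2)
    have h3 : HasDerivAt D (-((r - 2) * Real.sin x) + Real.cos x) x := by
      simpa [hD, Pi.add_def] using this
    convert h3 using 1
    ring
  have hq : HasDerivAt (fun y => N y / D y)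
      ((((2 - r) * Real.cos x - Real.sin x) * D x -
        N x * ((2 - r) * Real.sin x + Real.cos x)) / (D x) ^ 2) x :=
    hNd.div hDd hDpos.ne'
  have harc : HasDerivAt (fun y => Real.arctan (N y / D y))
      ((1 / (1 + (N x / D x) ^ 2)) *
        ((((2 - r) * Real.cos x - Real.sin x) * D x -
          N x * ((2 - r) * Real.sin x + Real.cos x)) / (D x) ^ 2)) x :=
    by have := (Real.hasDerivAt_arctan (N x / D x)).comp x hq; exact this
  have hall : HasDerivAt advF
      (1 / r + (2 / r) * ((1 / (1 + (N x / D x) ^ 2)) *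
        ((((2 - r) * Real.cos x - Real.sin x) * D x -
          N x * ((2 - r) * Real.sin x + Real.cos x)) / (D x) ^ 2))) x := by
    have hid : HasDerivAt (fun y : ℝ => y / r) (1 / r) x := by
      simpa using (hasDerivAt_id x).div_const r
    exact hid.add (harc.const_mul (2 / r))
  convert hall using 1
  have hr3 : r * r = 3 := Real.mul_self_sqrt (by norm_num)
  have hrpos : (0:ℝ) < r := lt_of_lt_of_le one_pos one_le_sqrt3
  have hs : Real.sin x ^ 2 + Real.cos x ^ 2 = 1 := Real.sin_sq_add_cos_sq x
  have h2s : (0:ℝ) < 2 + Real.sin x := two_add_sin_pos x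
  have h1q : (0:ℝ) < 1 + (N x / D x) ^ 2 := by positivity
  set s := Real.sin x
  set c := Real.cos x
  have hNx : N x = (2 - r) * s + 1 + c := rfl
  have hDx : D x = (2 + r) + (r - 2) * c + s := rfl
  rw [hNx, hDx]
  set De := 2 + r + (r - 2) * c + s with hDe
  set Ne := (2 - r) * s + 1 + c with hNe
  set nu := ((2 - r) * c - s) * De - Ne * ((2 - r) * s + c) with hnu
  have hDpos' : 0 < De := by rw [hDe]; exact advD_pos x
  have hrne : r ≠ 0 := hrpos.ne'
  have hSpos : 0 < De ^ 2 + Ne ^ 2 :=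
    add_pos_of_pos_of_nonneg (pow_pos hDpos' 2) (sq_nonneg _)
  have hr2 : r ^ 2 = 3 := by rw [sq]; exact hr3
  have key : r * (De ^ 2 + Ne ^ 2) = (2 + s) * ((De ^ 2 + Ne ^ 2) + 2 * nu) := by
    rw [hnu, hNe, hDe]
    linear_combination (4 - 4 * s * r + 8 * s) * hs +
      (2 - 2 * c ^ 2 - 2 * s ^ 2 - s + s * c ^ 2 + s ^ 3 + r + 2 * c * r
        + c ^ 2 * r + s ^ 2 * r) * hr2
  have expand : 1 / r + 2 / r * (1 / (1 + (Ne / De) ^ 2) * (nu / De ^ 2))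
      = ((De ^ 2 + Ne ^ 2) + 2 * nu) / (r * (De ^ 2 + Ne ^ 2)) := by
    have h1 : (1:ℝ) + (Ne / De) ^ 2 ≠ 0 := by positivity
    field_simp
  rw [expand, div_eq_div_iff h2s.ne' (mul_pos hrpos hSpos).ne']
  linear_combination key

lemma advF_diff : Differentiable ℝ advF :=
  fun x => (advF_hasDerivAt x).differentiableAt

lemma advF_deriv (x : ℝ) : deriv advF x = 1 / (2 + Real.sin x) :=
  (advF_hasDerivAt x).deriv

lemma advF_strictMono : StrictMono advF := by
  apply strictMono_of_deriv_pos
  intro x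
  rw [advF_deriv]
  exact div_pos one_pos (two_add_sin_pos x)

lemma advF_shift (x : ℝ) : advF x = advF (x - 2 * π) + 2 * π / Real.sqrt 3 := by
  unfold advF
  rw [Real.sin_sub_two_pi, Real.cos_sub_two_pi]
  ring

lemma advF_lower (x : ℝ) (hx : 0 ≤ x) : advF 0 + x / 3 ≤ advF x := by
  have hmono : Monotone (fun y => advF y - y / 3) := by
    apply monotone_of_deriv_nonneg
    · exact advF_diff.sub ((differentiable_id.div_const 3))
    · intro y
      have h1 : HasDerivAt (fun y : ℝ => advF y - y / 3)
          (1 / (2 + Real.sin y) - 1 / 3) y :=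
        (advF_hasDerivAt y).sub (by simpa using (hasDerivAt_id y).div_const 3)
      rw [h1.deriv]
      have hy := two_add_sin_pos y
      have : (2:ℝ) + Real.sin y ≤ 3 := by nlinarith [Real.sin_le_one y]
      have := one_div_le_one_div_of_le hy this
      linarith
  have := hmono hx
  simp only at this
  linarith

lemma advF_upper (x : ℝ) (hx : x ≤ 0) : advF x ≤ advF 0 + x / 3 := by
  have hmono : Monotone (fun y => advF y - y / 3) := by
    apply monotone_of_deriv_nonneg
    · exact advF_diff.sub ((differentiable_id.div_const 3))
    · intro y
      have h1 : HasDerivAt (fun y : ℝ => advF y - y / 3)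
          (1 / (2 + Real.sin y) - 1 / 3) y :=
        (advF_hasDerivAt y).sub (by simpa using (hasDerivAt_id y).div_const 3)
      rw [h1.deriv]
      have hy := two_add_sin_pos y
      have : (2:ℝ) + Real.sin y ≤ 3 := by nlinarith [Real.sin_le_one y]
      have := one_div_le_one_div_of_le hy this
      linarith
  have := hmono hx
  simp only at this
  linarith

lemma advF_surjective : Function.Surjective advF := by
  apply Continuous.surjective advF_diff.continuous
  · have h1 : Filter.Tendsto (fun x : ℝ => advF 0 + x / 3) Filter.atTop Filter.atTop :=
      Filter.tendsto_atTop_add_const_left _ _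
        (Filter.tendsto_id.atTop_div_const (by norm_num))
    apply Filter.tendsto_atTop_mono' _ _ h1
    filter_upwards [Filter.eventually_ge_atTop (0:ℝ)] with x hx
    exact advF_lower x hx
  · have h1 : Filter.Tendsto (fun x : ℝ => advF 0 + x / 3) Filter.atBot Filter.atBot :=
      Filter.tendsto_atBot_add_const_left _ _
        (Filter.tendsto_id.atBot_div_const (by norm_num))
    apply Filter.tendsto_atBot_mono' _ _ h1
    filter_upwards [Filter.eventually_le_atBot (0:ℝ)] with x hx
    exact advF_upper x hx

/-- The inverse flow map: `advX s` is the characteristic position. -/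
noncomputable def advE : ℝ ≃o ℝ :=
  StrictMono.orderIsoOfSurjective advF advF_strictMono advF_surjective

noncomputable def advX (s : ℝ) : ℝ := advE.symm s

lemma advX_advF (x : ℝ) : advX (advF x) = x :=
  advE.symm_apply_apply x

lemma advF_advX (s : ℝ) : advF (advX s) = s :=
  advE.apply_symm_apply s

lemma advX_hasDerivAt (s : ℝ) :
    HasDerivAt advX (2 + Real.sin (advX s)) s := by
  have hcont : ContinuousAt advX s := (advE.symm.continuous).continuousAt
  have hf := advF_hasDerivAt (advX s)
  have hne : (1 / (2 + Real.sin (advX s))) ≠ 0 :=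
    one_div_ne_zero (two_add_sin_pos _).ne'
  have := hf.of_local_left_inverse hcont hne
    (Filter.Eventually.of_forall fun y => advF_advX y)
  simpa using this

theorem advection_solution_period_shift
    (φ : ℝ × ℝ → ℝ) (hφ : Differentiable ℝ φ)
    (hpde : ∀ x t : ℝ,
      deriv (fun s => φ (x, s)) t +
        (2 + Real.sin x) * deriv (fun u => φ (u, t)) x = 0) :
    ∀ x t : ℝ, φ (x, t + 2 * π / Real.sqrt 3) = φ (x - 2 * π, t) := by
  -- relate the partial derivatives in the PDE with the Fréchet derivative of φ
  have hpart : ∀ a τ : ℝ,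
      (fderiv ℝ φ (a, τ)) (0, 1) + (2 + Real.sin a) * (fderiv ℝ φ (a, τ)) (1, 0) = 0 := by
    intro a τ
    have hx1 : HasDerivAt (fun u => φ (u, τ)) ((fderiv ℝ φ (a, τ)) (1, 0)) a := by
      have hcur : HasDerivAt (fun u : ℝ => (u, τ)) ((1 : ℝ), (0 : ℝ)) a :=
        (hasDerivAt_id a).prodMk (hasDerivAt_const a τ)
      exact ((hφ (a, τ)).hasFDerivAt).comp_hasDerivAt a hcur
    have ht1 : HasDerivAt (fun v => φ (a, v)) ((fderiv ℝ φ (a, τ)) (0, 1)) τ := by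
      have hcur : HasDerivAt (fun v : ℝ => (a, v)) ((0 : ℝ), (1 : ℝ)) τ :=
        (hasDerivAt_const τ a).prodMk (hasDerivAt_id τ)
      exact ((hφ (a, τ)).hasFDerivAt).comp_hasDerivAt τ hcur
    have := hpde a τ
    rw [hx1.deriv, ht1.deriv] at this
    exact this
  intro x t
  set c : ℝ := advF (x - 2 * π) with hc
  set ψ : ℝ → ℝ := fun s => φ (advX (c + s), t + s) with hψ
  have hψd : ∀ s, HasDerivAt ψ 0 s := by
    intro s
    set a : ℝ := advX (c + s) with ha
    have hX' : HasDerivAt (fun s' : ℝ => advX (c + s')) (2 + Real.sin a) s := by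
      have h1 : HasDerivAt (fun s' : ℝ => c + s') 1 s := by
        simpa using (hasDerivAt_id s).const_add c
      simpa [Function.comp_def] using (advX_hasDerivAt (c + s)).comp s h1
    have ht' : HasDerivAt (fun s' : ℝ => t + s') 1 s := by
      simpa using (hasDerivAt_id s).const_add t
    have hcur : HasDerivAt (fun s' : ℝ => (advX (c + s'), t + s'))
        ((2 + Real.sin a, 1) : ℝ × ℝ) s := hX'.prodMk ht'
    have hcomp : HasDerivAt ψ ((fderiv ℝ φ (a, t + s)) (2 + Real.sin a, 1)) s :=
      ((hφ (a, t + s)).hasFDerivAt).comp_hasDerivAt s hcur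
    have hval : (fderiv ℝ φ (a, t + s)) (2 + Real.sin a, 1) = 0 := by
      have hdecomp : ((2 + Real.sin a, 1) : ℝ × ℝ)
          = (2 + Real.sin a) • ((1 : ℝ), (0 : ℝ)) + ((0 : ℝ), (1 : ℝ)) := by
        simp [Prod.ext_iff]
      rw [hdecomp, map_add, map_smul, smul_eq_mul]
      have := hpart a (t + s)
      linarith
    rw [hval] at hcomp
    exact hcomp
  have hconst : ψ (2 * π / Real.sqrt 3) = ψ 0 := by
    apply is_const_of_deriv_eq_zero
    · exact fun s => (hψd s).differentiableAt
    · exact fun s => (hψd s).deriv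
  have h0 : ψ 0 = φ (x - 2 * π, t) := by
    simp only [hψ, add_zero]
    rw [hc, advX_advF]
  have hT : ψ (2 * π / Real.sqrt 3) = φ (x, t + 2 * π / Real.sqrt 3) := by
    simp only [hψ]
    have : c + 2 * π / Real.sqrt 3 = advF x := by
      rw [hc, advF_shift x]
    rw [this, advX_advF]
  rw [← hT, hconst, h0]
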